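/- Let κ ≥ 1 and 0 < δ < ∞. With T̃_{δ,κ−1/2}(n) defined as the odd shallow-water multiplier (normalized so that ã_{2κ−1,1} = 3 and 𝔏_δ(n) → n²/3 as δ → 0) and T̃_{δ,κ}(n) the even one (with ã_{2κ,0} = 1), one has the pointwise limits lim_{δ→0} T̃_{δ,κ−1/2}(n) = lim_{δ→0} T̃_{δ,κ}(n) = n^{2κ} for every nonzero integer n. Moreover, for fixed 0 < δ ≤ 1, |n|^{2κ−1} ≲_δ T̃_{δ,κ−1/2}(n) ≲ min(δ^{−1}|n|^{2κ−1}, n^{2κ}) and T̃_{δ,κ}(n) is comparable to n^{2κ} uniformly in n and δ. -/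

import Mathlib

open Real Filter

/-- `coth x = (e^x + e^{-x})/(e^x - e^{-x}) = cosh x / sinh x` (for `x ≠ 0`). -/
noncomputable def myCoth (x : ℝ) : ℝ := Real.cosh x / Real.sinh x

/-- The scaled ILW dispersion multiplier `𝔏_δ(n) = δ⁻¹ (n · coth(δn) − δ⁻¹)`. -/
noncomputable def Lmul (δ : ℝ) (n : ℤ) : ℝ := δ⁻¹ * ((n : ℝ) * myCoth (δ * n) - δ⁻¹)

/-- The odd-order shallow-water Gaussian multiplier
`T̃_{δ,κ−1/2}(n) = Σ_{ℓ odd, 1 ≤ ℓ ≤ 2κ−1} (3/(2κ)) C(2κ,ℓ) δ^{ℓ−1} 𝔏_δ(n)^ℓ n^{2κ−1−ℓ}`,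
normalized so that `ã_{2κ−1,1} = 3`. -/
noncomputable def TtOdd (κ : ℕ) (δ : ℝ) (n : ℤ) : ℝ :=
  ∑ ℓ ∈ Finset.range (2 * κ), if Odd ℓ then
    (3 / (2 * κ : ℝ)) * ((2 * κ).choose ℓ : ℝ) * δ ^ (ℓ - 1) * Lmul δ n ^ ℓ *
      (n : ℝ) ^ (2 * κ - 1 - ℓ) else 0

/-- The even-order shallow-water Gaussian multiplier
`T̃_{δ,κ}(n) = Σ_{ℓ even, 0 ≤ ℓ ≤ 2κ} C(2κ+1,ℓ) δ^ℓ 𝔏_δ(n)^ℓ n^{2κ−ℓ}`,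
with `ã_{2κ,0} = 1`. -/
noncomputable def TtEven (κ : ℕ) (δ : ℝ) (n : ℤ) : ℝ :=
  ∑ ℓ ∈ Finset.range (2 * κ + 1), if Even ℓ then
    ((2 * κ + 1).choose ℓ : ℝ) * δ ^ ℓ * Lmul δ n ^ ℓ * (n : ℝ) ^ (2 * κ - ℓ) else 0


private lemma pos_of_deriv_pos (f f' : ℝ → ℝ)
    (hd : ∀ x, HasDerivAt f (f' x) x) (h0 : f 0 = 0)
    (hp : ∀ x, 0 < x → 0 < f' x) {x : ℝ} (hx : 0 < x) : 0 < f x := by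
  have hmono : StrictMonoOn f (Set.Ici 0) := by
    apply strictMonoOn_of_deriv_pos (convex_Ici 0)
    · exact fun y _ => (hd y).continuousAt.continuousWithinAt
    · intro y hy
      rw [interior_Ici] at hy
      rw [(hd y).deriv]
      exact hp y hy
  have := hmono Set.self_mem_Ici (Set.mem_Ici.mpr hx.le) hx
  rwa [h0] at this

lemma g_pos {x : ℝ} (hx : 0 < x) : Real.sinh x < x * Real.cosh x := by
  have h := pos_of_deriv_pos (fun x => x * Real.cosh x - Real.sinh x)
      (fun x => x * Real.sinh x) ?_ (by simp) ?_ hx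
  · linarith
  · intro y
    have := ((hasDerivAt_id y).mul (Real.hasDerivAt_cosh y)).sub (Real.hasDerivAt_sinh y)
    exact this.congr_deriv (by simp only [id_eq]; ring)
  · intro y hy; exact mul_pos hy (Real.sinh_pos_iff.mpr hy)

lemma g_lb {x : ℝ} (hx : 0 < x) : x ^ 3 / 3 ≤ x * Real.cosh x - Real.sinh x := by
  have h := pos_of_deriv_pos (fun x => x * Real.cosh x - Real.sinh x - x ^ 3 / 3)
      (fun x => x * (Real.sinh x - x)) ?_ (by simp) ?_ hx
  · linarith
  · intro y
    have := (((hasDerivAt_id y).mul (Real.hasDerivAt_cosh y)).sub (Real.hasDerivAt_sinh y)).sub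
      ((hasDerivAt_pow 3 y).div_const 3)
    exact this.congr_deriv (by simp only [id_eq]; push_cast; ring)
  · intro y hy
    exact mul_pos hy (by have := Real.self_lt_sinh_iff.mpr hy; linarith)

lemma g_ub2 {x : ℝ} (hx : 0 < x) : x * Real.cosh x - Real.sinh x ≤ x ^ 2 / 3 * Real.sinh x := by
  have h := pos_of_deriv_pos
      (fun x => x ^ 2 / 3 * Real.sinh x - (x * Real.cosh x - Real.sinh x))
      (fun x => x / 3 * (x * Real.cosh x - Real.sinh x)) ?_ (by simp) ?_ hx
  · linarith
  · intro y
    have := (((hasDerivAt_pow 2 y).div_const 3).mul (Real.hasDerivAt_sinh y)).sub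
      (((hasDerivAt_id y).mul (Real.hasDerivAt_cosh y)).sub (Real.hasDerivAt_sinh y))
    exact this.congr_deriv (by simp only [id_eq]; push_cast; ring)
  · intro y hy
    have := g_pos hy
    have : 0 < y * Real.cosh y - Real.sinh y := by linarith
    positivity

lemma g_ub1 {x : ℝ} (hx : 0 < x) : x * Real.cosh x - Real.sinh x ≤ x * Real.sinh x := by
  have h := pos_of_deriv_pos
      (fun x => x * Real.sinh x - (x * Real.cosh x - Real.sinh x))
      (fun x => Real.sinh x + x * (Real.cosh x - Real.sinh x)) ?_ (by simp) ?_ hx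
  · linarith
  · intro y
    have := (((hasDerivAt_id y).mul (Real.hasDerivAt_sinh y))).sub
      (((hasDerivAt_id y).mul (Real.hasDerivAt_cosh y)).sub (Real.hasDerivAt_sinh y))
    exact this.congr_deriv (by simp only [id_eq]; ring)
  · intro y hy
    have h1 := Real.sinh_pos_iff.mpr hy
    have h2 := Real.sinh_lt_cosh y
    have h3 : 0 < y * (Real.cosh y - Real.sinh y) := mul_pos hy (by linarith)
    linarith



lemma coth_sub_eq {x : ℝ} (hx : 0 < x) :
    x * myCoth x - 1 = (x * Real.cosh x - Real.sinh x) / Real.sinh x := by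
  have hs := Real.sinh_pos_iff.mpr hx
  rw [myCoth]
  field_simp

lemma coth_sub_pos {x : ℝ} (hx : 0 < x) : 0 < x * myCoth x - 1 := by
  have hs := Real.sinh_pos_iff.mpr hx
  rw [coth_sub_eq hx]
  exact div_pos (by linarith [g_pos hx]) hs

lemma coth_sub_le_sq {x : ℝ} (hx : 0 < x) : x * myCoth x - 1 ≤ x ^ 2 / 3 := by
  have hs := Real.sinh_pos_iff.mpr hx
  rw [coth_sub_eq hx, div_le_iff₀ hs]
  have := g_ub2 hx
  linarith

lemma coth_sub_le_lin {x : ℝ} (hx : 0 < x) : x * myCoth x - 1 ≤ x := by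
  have hs := Real.sinh_pos_iff.mpr hx
  rw [coth_sub_eq hx, div_le_iff₀ hs]
  have := g_ub1 hx
  linarith

lemma coth_sub_lb {x : ℝ} (hx : 0 < x) :
    min (x ^ 2) x / (3 * Real.cosh 2) ≤ x * myCoth x - 1 := by
  have hs := Real.sinh_pos_iff.mpr hx
  have hc2 : (1 : ℝ) ≤ Real.cosh 2 := Real.one_le_cosh 2
  have hd : (0 : ℝ) < 3 * Real.cosh 2 := by linarith
  rcases le_total x 2 with h2 | h2
  · have hc : Real.cosh x ≤ Real.cosh 2 := by
      rw [Real.cosh_le_cosh]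
      rw [abs_of_pos hx, abs_of_pos (by norm_num : (0:ℝ) < 2)]
      exact h2
    have h1 : x ^ 3 / 3 ≤ x * Real.cosh x - Real.sinh x := g_lb hx
    have h3 : Real.sinh x ≤ x * Real.cosh 2 :=
      le_trans (le_of_lt (g_pos hx)) (mul_le_mul_of_nonneg_left hc hx.le)
    rw [coth_sub_eq hx, le_div_iff₀ hs]
    calc min (x ^ 2) x / (3 * Real.cosh 2) * Real.sinh x
        ≤ x ^ 2 / (3 * Real.cosh 2) * (x * Real.cosh 2) := by
          apply mul_le_mul _ h3 hs.le (by positivity)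
          exact by gcongr; exact min_le_left _ _
      _ = x ^ 3 / 3 := by field_simp
      _ ≤ x * Real.cosh x - Real.sinh x := h1
  · have hmin : min (x ^ 2) x = x := min_eq_right (by nlinarith)
    rw [hmin]
    have hcoth : 1 ≤ myCoth x :=
      (one_le_div hs).mpr (Real.sinh_lt_cosh x).le
    have hxc : x - 1 ≤ x * myCoth x - 1 := by nlinarith
    have h4 : x / (3 * Real.cosh 2) ≤ x / 2 :=
      div_le_div_of_nonneg_left hx.le (by norm_num) (by linarith)
    linarith

lemma myCoth_neg (x : ℝ) : myCoth (-x) = - myCoth x := by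
  simp [myCoth, Real.cosh_neg, Real.sinh_neg, div_neg]

lemma Lmul_eq {δ : ℝ} (hδ : 0 < δ) {n : ℤ} (hn : n ≠ 0) :
    Lmul δ n = ((δ * |(n : ℝ)|) * myCoth (δ * |(n : ℝ)|) - 1) / δ ^ 2 := by
  have h1 : (n : ℝ) * myCoth (δ * n) = |(n : ℝ)| * myCoth (δ * |(n : ℝ)|) := by
    rcases abs_choice (n : ℝ) with h | h
    · rw [h]
    · rw [h, mul_neg, myCoth_neg]; ring
  rw [Lmul, h1]
  field_simp

variable {δ : ℝ} {n : ℤ}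

lemma abs_n_pos (hn : n ≠ 0) : 0 < |(n : ℝ)| :=
  abs_pos.mpr (Int.cast_ne_zero.mpr hn)

lemma one_le_abs_n (hn : n ≠ 0) : (1 : ℝ) ≤ |(n : ℝ)| := by
  rw [← Int.cast_abs]
  exact_mod_cast Int.one_le_abs (by omega)

lemma Lmul_pos (hδ : 0 < δ) (hn : n ≠ 0) : 0 < Lmul δ n := by
  have hx : 0 < δ * |(n : ℝ)| := mul_pos hδ (abs_n_pos hn)
  rw [Lmul_eq hδ hn]
  exact div_pos (coth_sub_pos hx) (by positivity)

lemma Lmul_le_sq (hδ : 0 < δ) (hn : n ≠ 0) : Lmul δ n ≤ (n : ℝ) ^ 2 / 3 := by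
  have hx : 0 < δ * |(n : ℝ)| := mul_pos hδ (abs_n_pos hn)
  have h := coth_sub_le_sq hx
  have hsq : (δ * |(n : ℝ)|) ^ 2 = (n : ℝ) ^ 2 * δ ^ 2 := by rw [mul_pow, sq_abs]; ring
  rw [hsq] at h
  rw [Lmul_eq hδ hn, div_le_iff₀ (by positivity)]
  linarith

lemma Lmul_le_lin (hδ : 0 < δ) (hn : n ≠ 0) : Lmul δ n ≤ |(n : ℝ)| / δ := by
  have hx : 0 < δ * |(n : ℝ)| := mul_pos hδ (abs_n_pos hn)
  have h := coth_sub_le_lin hx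
  rw [Lmul_eq hδ hn, div_le_div_iff₀ (by positivity) hδ]
  nlinarith

lemma Lmul_lb (hδ : 0 < δ) (hδ1 : δ ≤ 1) (hn : n ≠ 0) :
    |(n : ℝ)| / (3 * Real.cosh 2) ≤ Lmul δ n := by
  have hna := abs_n_pos hn
  have hn1 := one_le_abs_n hn
  have hx : 0 < δ * |(n : ℝ)| := mul_pos hδ hna
  have hc2 : (0 : ℝ) < Real.cosh 2 := Real.cosh_pos 2
  have hmin : δ ^ 2 * |(n : ℝ)| ≤ min ((δ * |(n : ℝ)|) ^ 2) (δ * |(n : ℝ)|) :=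
    le_min (by nlinarith) (by nlinarith)
  rw [Lmul_eq hδ hn, le_div_iff₀ (by positivity)]
  calc |(n : ℝ)| / (3 * Real.cosh 2) * δ ^ 2
      = δ ^ 2 * |(n : ℝ)| / (3 * Real.cosh 2) := by ring
    _ ≤ min ((δ * |(n : ℝ)|) ^ 2) (δ * |(n : ℝ)|) / (3 * Real.cosh 2) := by gcongr
    _ ≤ _ := coth_sub_lb hx

lemma deltaLmul_le (hδ : 0 < δ) (hn : n ≠ 0) : δ * Lmul δ n ≤ |(n : ℝ)| := by
  have := Lmul_le_lin hδ hn
  rw [div_eq_inv_mul] at this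
  calc δ * Lmul δ n ≤ δ * (δ⁻¹ * |(n : ℝ)|) := by
        apply mul_le_mul_of_nonneg_left this hδ.le
    _ = |(n : ℝ)| := by field_simp

lemma tendsto_div_sinh :
    Tendsto (fun x : ℝ => x / Real.sinh x) (nhdsWithin 0 {(0:ℝ)}ᶜ) (nhds 1) := by
  have h : HasDerivAt Real.sinh 1 0 := by simpa using Real.hasDerivAt_sinh 0
  rw [hasDerivAt_iff_tendsto_slope] at h
  have h2 : Tendsto (fun x : ℝ => Real.sinh x / x) (nhdsWithin 0 {(0:ℝ)}ᶜ) (nhds 1) := by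
    apply h.congr'
    filter_upwards [self_mem_nhdsWithin] with x hx
    simp [slope_def_field]
  have h3 := h2.inv₀ one_ne_zero
  simp only [inv_one] at h3
  apply h3.congr
  intro x; rw [inv_div]

lemma F_bounds_pos {x : ℝ} (hx : 0 < x) :
    x / (3 * Real.sinh x) ≤ (x * Real.cosh x - Real.sinh x) / (x ^ 2 * Real.sinh x) ∧
    (x * Real.cosh x - Real.sinh x) / (x ^ 2 * Real.sinh x) ≤ 1 / 3 := by
  have hs : 0 < Real.sinh x := Real.sinh_pos_iff.mpr hx
  constructor
  · rw [div_le_div_iff₀ (by positivity) (by positivity)]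
    nlinarith [mul_le_mul_of_nonneg_right (g_lb hx) hs.le]
  · rw [div_le_div_iff₀ (by positivity) (by norm_num)]
    nlinarith [g_ub2 hx]

lemma F_bounds {x : ℝ} (hx : x ≠ 0) :
    x / (3 * Real.sinh x) ≤ (x * Real.cosh x - Real.sinh x) / (x ^ 2 * Real.sinh x) ∧
    (x * Real.cosh x - Real.sinh x) / (x ^ 2 * Real.sinh x) ≤ 1 / 3 := by
  rcases hx.lt_or_gt with hneg | hpos
  · have h := F_bounds_pos (neg_pos.mpr hneg)
    rw [Real.sinh_neg, Real.cosh_neg] at h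
    have e1 : -x / (3 * -Real.sinh x) = x / (3 * Real.sinh x) := by
      rw [mul_neg, neg_div_neg_eq]
    have e2 : (-x * Real.cosh x - -Real.sinh x) / ((-x) ^ 2 * -Real.sinh x)
        = (x * Real.cosh x - Real.sinh x) / (x ^ 2 * Real.sinh x) := by
      rw [neg_pow, mul_neg, ← neg_div_neg_eq]
      ring_nf
    rw [e1, e2] at h
    exact h
  · exact F_bounds_pos hpos

lemma F_tendsto :
    Tendsto (fun x : ℝ => (x * Real.cosh x - Real.sinh x) / (x ^ 2 * Real.sinh x))
      (nhdsWithin 0 {(0:ℝ)}ᶜ) (nhds (1 / 3)) := by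
  apply tendsto_of_tendsto_of_tendsto_of_le_of_le'
      (g := fun x : ℝ => x / (3 * Real.sinh x)) (h := fun _ : ℝ => (1:ℝ)/3)
  · have := tendsto_div_sinh.div_const 3
    rw [show (1:ℝ)/3 = 1/3 from rfl]
    apply this.congr
    intro x
    rw [div_div, mul_comm]
  · exact tendsto_const_nhds
  · filter_upwards [self_mem_nhdsWithin] with x hx
    exact (F_bounds hx).1
  · filter_upwards [self_mem_nhdsWithin] with x hx
    exact (F_bounds hx).2

lemma Lmul_tendsto {n : ℤ} (hn : n ≠ 0) :
    Tendsto (fun δ : ℝ => Lmul δ n) (nhdsWithin 0 (Set.Ioi 0)) (nhds ((n : ℝ) ^ 2 / 3)) := by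
  have hnr : (n : ℝ) ≠ 0 := Int.cast_ne_zero.mpr hn
  have hxt : Tendsto (fun δ : ℝ => δ * (n : ℝ)) (nhdsWithin 0 (Set.Ioi 0))
      (nhdsWithin 0 {(0:ℝ)}ᶜ) := by
    rw [tendsto_nhdsWithin_iff]
    constructor
    · have h0 : Tendsto (fun δ : ℝ => δ * (n : ℝ)) (nhds 0) (nhds (0 * (n:ℝ))) :=
        (continuous_id.mul continuous_const).tendsto 0
      simpa using h0.mono_left nhdsWithin_le_nhds
    · filter_upwards [self_mem_nhdsWithin] with δ hδ
      simpa using mul_ne_zero (ne_of_gt hδ) hnr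
  have hF := F_tendsto.comp hxt
  have h2 := hF.const_mul ((n : ℝ) ^ 2)
  have hval : (n : ℝ) ^ 2 * (1 / 3) = (n : ℝ) ^ 2 / 3 := by ring
  rw [hval] at h2
  apply h2.congr'
  filter_upwards [self_mem_nhdsWithin] with δ hδ
  have hδ0 : (δ : ℝ) ≠ 0 := ne_of_gt hδ
  have hsn : Real.sinh (δ * n) ≠ 0 := Real.sinh_ne_zero.mpr (mul_ne_zero hδ0 hnr)
  simp only [Function.comp]
  rw [Lmul, myCoth]
  field_simp



lemma even_sub_odd {κ ℓ : ℕ} (hκ : 1 ≤ κ) (hℓ : Odd ℓ) : Even (2 * κ - 1 - ℓ) :=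
  Nat.Odd.sub_odd ⟨κ - 1, by omega⟩ hℓ

lemma even_sub_even {κ ℓ : ℕ} (hℓ : Even ℓ) : Even (2 * κ - ℓ) := by
  rcases le_or_gt ℓ (2 * κ) with h | h
  · rw [Nat.even_sub h]
    simp only [iff_true, hℓ]
    exact ⟨κ, by omega⟩
  · rw [Nat.sub_eq_zero_of_le h.le]
    exact Even.zero

lemma ttOdd_term_nonneg {κ : ℕ} (hκ : 1 ≤ κ) (hδ : 0 < δ) (hn : n ≠ 0) (ℓ : ℕ) :
    0 ≤ (if Odd ℓ then
      (3 / (2 * κ : ℝ)) * ((2 * κ).choose ℓ : ℝ) * δ ^ (ℓ - 1) * Lmul δ n ^ ℓ *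
        (n : ℝ) ^ (2 * κ - 1 - ℓ) else 0) := by
  split
  case isTrue hodd =>
    have hL := (Lmul_pos hδ hn).le
    have hev : Even (2 * κ - 1 - ℓ) := even_sub_odd hκ hodd
    have h5 : (0:ℝ) ≤ (n : ℝ) ^ (2 * κ - 1 - ℓ) := hev.pow_nonneg _
    have h1 : (0:ℝ) ≤ 3 / (2 * κ : ℝ) := by positivity
    have h2 : (0:ℝ) ≤ ((2 * κ).choose ℓ : ℝ) := Nat.cast_nonneg _
    have h3 : (0:ℝ) ≤ δ ^ (ℓ - 1) := by positivity
    have h4 : (0:ℝ) ≤ Lmul δ n ^ ℓ := pow_nonneg hL _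
    exact mul_nonneg (mul_nonneg (mul_nonneg (mul_nonneg h1 h2) h3) h4) h5
  case isFalse => exact le_refl _

lemma ttEven_term_nonneg {κ : ℕ} (hδ : 0 < δ) (hn : n ≠ 0) (ℓ : ℕ) :
    0 ≤ (if Even ℓ then
      ((2 * κ + 1).choose ℓ : ℝ) * δ ^ ℓ * Lmul δ n ^ ℓ * (n : ℝ) ^ (2 * κ - ℓ) else 0) := by
  split
  case isTrue hev =>
    have h5 : (0:ℝ) ≤ (n : ℝ) ^ (2 * κ - ℓ) := (even_sub_even hev).pow_nonneg _
    have h4 : (0:ℝ) ≤ Lmul δ n ^ ℓ := pow_nonneg (Lmul_pos hδ hn).le _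
    have h2 : (0:ℝ) ≤ ((2 * κ + 1).choose ℓ : ℝ) := Nat.cast_nonneg _
    have h3 : (0:ℝ) ≤ δ ^ ℓ := by positivity
    exact mul_nonneg (mul_nonneg (mul_nonneg h2 h3) h4) h5
  case isFalse => exact le_refl _

lemma sum_choose_bound {M m : ℕ} (hm : m ≤ M + 1) (f : ℕ → ℝ) (B : ℝ) (hB : 0 ≤ B)
    (h : ∀ ℓ ∈ Finset.range m, f ℓ ≤ (M.choose ℓ : ℝ) * B) :
    ∑ ℓ ∈ Finset.range m, f ℓ ≤ 2 ^ M * B := by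
  have hsub : ∑ ℓ ∈ Finset.range m, M.choose ℓ ≤ ∑ ℓ ∈ Finset.range (M + 1), M.choose ℓ :=
    Finset.sum_le_sum_of_subset (Finset.range_subset_range.mpr hm)
  rw [Nat.sum_range_choose] at hsub
  calc ∑ ℓ ∈ Finset.range m, f ℓ ≤ ∑ ℓ ∈ Finset.range m, (M.choose ℓ : ℝ) * B :=
        Finset.sum_le_sum h
    _ = ((∑ ℓ ∈ Finset.range m, M.choose ℓ : ℕ) : ℝ) * B := by
        rw [← Finset.sum_mul]; push_cast; ring
    _ ≤ 2 ^ M * B := by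
        apply mul_le_mul_of_nonneg_right _ hB
        exact_mod_cast hsub

lemma ttOdd_lower {κ : ℕ} (hκ : 1 ≤ κ) (hδ : 0 < δ) (hδ1 : δ ≤ 1) (hn : n ≠ 0) :
    (Real.cosh 2)⁻¹ * |(n : ℝ)| ^ (2 * κ - 1) ≤ TtOdd κ δ n := by
  have hc2 : (0 : ℝ) < Real.cosh 2 := Real.cosh_pos 2
  have hna := abs_n_pos hn
  have hterm : (3 / (2 * κ : ℝ)) * ((2 * κ).choose 1 : ℝ) * δ ^ (1 - 1) * Lmul δ n ^ 1 *
      (n : ℝ) ^ (2 * κ - 1 - 1) = 3 * Lmul δ n * (n : ℝ) ^ (2 * κ - 2) := by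
    have h2κ : (2 * κ : ℝ) ≠ 0 := by positivity
    rw [Nat.choose_one_right, show 2 * κ - 1 - 1 = 2 * κ - 2 from by omega]
    push_cast
    field_simp
  have hmem : 1 ∈ Finset.range (2 * κ) := Finset.mem_range.mpr (by omega)
  have hsingle := Finset.single_le_sum
      (f := fun ℓ => if Odd ℓ then
        (3 / (2 * κ : ℝ)) * ((2 * κ).choose ℓ : ℝ) * δ ^ (ℓ - 1) * Lmul δ n ^ ℓ *
          (n : ℝ) ^ (2 * κ - 1 - ℓ) else 0)
      (fun i _ => ttOdd_term_nonneg hκ hδ hn i) hmem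
  rw [if_pos odd_one, hterm] at hsingle
  rw [TtOdd]
  refine le_trans ?_ hsingle
  have habs : (n : ℝ) ^ (2 * κ - 2) = |(n : ℝ)| ^ (2 * κ - 2) :=
    (Even.pow_abs (⟨κ - 1, by omega⟩ : Even (2 * κ - 2)) _).symm
  rw [habs]
  calc (Real.cosh 2)⁻¹ * |(n : ℝ)| ^ (2 * κ - 1)
      = 3 * (|(n : ℝ)| / (3 * Real.cosh 2)) * |(n : ℝ)| ^ (2 * κ - 2) := by
        rw [show 2 * κ - 1 = (2 * κ - 2) + 1 by omega, pow_succ]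
        field_simp
    _ ≤ 3 * Lmul δ n * |(n : ℝ)| ^ (2 * κ - 2) := by
        gcongr
        exact Lmul_lb hδ hδ1 hn

lemma ttOdd_upper {κ : ℕ} (hκ : 1 ≤ κ) (hδ : 0 < δ) (hn : n ≠ 0) :
    TtOdd κ δ n ≤ 3 * 2 ^ (2 * κ) * min (δ⁻¹ * |(n : ℝ)| ^ (2 * κ - 1)) ((n : ℝ) ^ (2 * κ)) := by
  have hna := abs_n_pos hn
  have hL := Lmul_pos hδ hn
  have ha0 : (0:ℝ) ≤ δ * Lmul δ n := by positivity
  have ha : δ * Lmul δ n ≤ |(n : ℝ)| := deltaLmul_le hδ hn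
  have hnevp : (n : ℝ) ^ (2 * κ) = |(n : ℝ)| ^ (2 * κ) :=
    (Even.pow_abs ⟨κ, by omega⟩ _).symm
  have h2κpos : (0:ℝ) < 2 * (κ:ℝ) := by
    have : (1:ℝ) ≤ (κ:ℝ) := Nat.one_le_cast.mpr hκ
    linarith
  rw [mul_min_of_nonneg _ _ (by positivity : (0:ℝ) ≤ 3 * 2 ^ (2 * κ))]
  apply le_min
  · -- branch B: δ⁻¹ |n|^{2κ-1}
    rw [TtOdd, show (3:ℝ) * 2 ^ (2 * κ) * (δ⁻¹ * |(n : ℝ)| ^ (2 * κ - 1))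
        = 2 ^ (2 * κ) * (3 * (δ⁻¹ * |(n : ℝ)| ^ (2 * κ - 1))) from by ring]
    apply sum_choose_bound (M := 2 * κ) (m := 2 * κ) (by omega) _ _ (by positivity)
    intro ℓ hℓ
    rw [Finset.mem_range] at hℓ
    split
    case isTrue hodd =>
      have hℓ1 : 1 ≤ ℓ := hodd.pos
      have heq : δ ^ (ℓ - 1) * Lmul δ n ^ ℓ = δ⁻¹ * (δ * Lmul δ n) ^ ℓ := by
        rw [mul_pow, show δ ^ ℓ = δ ^ (ℓ - 1) * δ from by
          rw [← pow_succ, Nat.sub_add_cancel hℓ1]]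
        field_simp
      have habs : (n : ℝ) ^ (2 * κ - 1 - ℓ) = |(n : ℝ)| ^ (2 * κ - 1 - ℓ) :=
        (Even.pow_abs (even_sub_odd hκ hodd) _).symm
      have hpow : (δ * Lmul δ n) ^ ℓ ≤ |(n : ℝ)| ^ ℓ := pow_le_pow_left₀ ha0 ha ℓ
      have hfrac : 3 / (2 * κ : ℝ) ≤ 3 := by
        rw [div_le_iff₀ h2κpos]
        have hκr : (1:ℝ) ≤ (κ:ℝ) := Nat.one_le_cast.mpr hκ
        nlinarith
      calc 3 / (2 * κ : ℝ) * ((2 * κ).choose ℓ : ℝ) * δ ^ (ℓ - 1) * Lmul δ n ^ ℓ *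
            (n : ℝ) ^ (2 * κ - 1 - ℓ)
          = ((2 * κ).choose ℓ : ℝ) * (3 / (2 * κ : ℝ)) *
              (δ⁻¹ * ((δ * Lmul δ n) ^ ℓ * |(n : ℝ)| ^ (2 * κ - 1 - ℓ))) := by
            rw [habs]
            linear_combination (3 / (2 * κ : ℝ) * ((2 * κ).choose ℓ : ℝ) *
              |(n : ℝ)| ^ (2 * κ - 1 - ℓ)) * heq
        _ ≤ ((2 * κ).choose ℓ : ℝ) * 3 *
              (δ⁻¹ * (|(n : ℝ)| ^ ℓ * |(n : ℝ)| ^ (2 * κ - 1 - ℓ))) := by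
            gcongr
        _ = ((2 * κ).choose ℓ : ℝ) * (3 * (δ⁻¹ * |(n : ℝ)| ^ (2 * κ - 1))) := by
            rw [← pow_add, show ℓ + (2 * κ - 1 - ℓ) = 2 * κ - 1 from by omega]
            ring
    case isFalse => positivity
  · -- branch A: n^{2κ}
    rw [TtOdd, show (3:ℝ) * 2 ^ (2 * κ) * ((n : ℝ) ^ (2 * κ))
        = 2 ^ (2 * κ) * (3 * (n : ℝ) ^ (2 * κ)) from by ring]
    apply sum_choose_bound (M := 2 * κ) (m := 2 * κ) (by omega) _ _ (by rw [hnevp]; positivity)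
    intro ℓ hℓ
    rw [Finset.mem_range] at hℓ
    split
    case isTrue hodd =>
      have hℓ1 : 1 ≤ ℓ := hodd.pos
      have hℓ2 : ℓ ≤ 2 * κ - 1 := by omega
      have heq : δ ^ (ℓ - 1) * Lmul δ n ^ ℓ = (δ * Lmul δ n) ^ (ℓ - 1) * Lmul δ n := by
        rw [mul_pow, show Lmul δ n ^ ℓ = Lmul δ n ^ (ℓ - 1) * Lmul δ n from by
          rw [← pow_succ, Nat.sub_add_cancel hℓ1]]
        ring
      have habs : (n : ℝ) ^ (2 * κ - 1 - ℓ) = |(n : ℝ)| ^ (2 * κ - 1 - ℓ) :=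
        (Even.pow_abs (even_sub_odd hκ hodd) _).symm
      have hpow : (δ * Lmul δ n) ^ (ℓ - 1) ≤ |(n : ℝ)| ^ (ℓ - 1) := pow_le_pow_left₀ ha0 ha _
      have hLsq : Lmul δ n ≤ |(n : ℝ)| ^ 2 / 3 := by
        have := Lmul_le_sq hδ hn
        rwa [← sq_abs] at this
      have hfrac : 3 / (2 * κ : ℝ) ≤ 3 := by
        rw [div_le_iff₀ h2κpos]
        have hκr : (1:ℝ) ≤ (κ:ℝ) := Nat.one_le_cast.mpr hκ
        nlinarith
      calc 3 / (2 * κ : ℝ) * ((2 * κ).choose ℓ : ℝ) * δ ^ (ℓ - 1) * Lmul δ n ^ ℓ *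
            (n : ℝ) ^ (2 * κ - 1 - ℓ)
          = ((2 * κ).choose ℓ : ℝ) * (3 / (2 * κ : ℝ)) *
              ((δ * Lmul δ n) ^ (ℓ - 1) * Lmul δ n * |(n : ℝ)| ^ (2 * κ - 1 - ℓ)) := by
            rw [habs, ← heq]
            ring
        _ ≤ ((2 * κ).choose ℓ : ℝ) * 3 *
              (|(n : ℝ)| ^ (ℓ - 1) * (|(n : ℝ)| ^ 2 / 3) * |(n : ℝ)| ^ (2 * κ - 1 - ℓ)) := by
            gcongr
        _ = ((2 * κ).choose ℓ : ℝ) *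
              (|(n : ℝ)| ^ ((ℓ - 1) + 2 + (2 * κ - 1 - ℓ))) := by
            rw [pow_add, pow_add]
            ring
        _ = ((2 * κ).choose ℓ : ℝ) * (3 * (n : ℝ) ^ (2 * κ)) / 3 := by
            rw [hnevp, show (ℓ - 1) + 2 + (2 * κ - 1 - ℓ) = 2 * κ from by omega]
            ring
        _ ≤ ((2 * κ).choose ℓ : ℝ) * (3 * (n : ℝ) ^ (2 * κ)) := by
            have hpos : (0:ℝ) ≤ ((2 * κ).choose ℓ : ℝ) * (3 * (n : ℝ) ^ (2 * κ)) := by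
              rw [hnevp]; positivity
            linarith
    case isFalse =>
      rw [hnevp]; positivity

lemma ttEven_lower {κ : ℕ} (hδ : 0 < δ) (hn : n ≠ 0) :
    (n : ℝ) ^ (2 * κ) ≤ TtEven κ δ n := by
  have hmem : 0 ∈ Finset.range (2 * κ + 1) := Finset.mem_range.mpr (by omega)
  have hsingle := Finset.single_le_sum
      (f := fun ℓ => if Even ℓ then
        ((2 * κ + 1).choose ℓ : ℝ) * δ ^ ℓ * Lmul δ n ^ ℓ * (n : ℝ) ^ (2 * κ - ℓ) else 0)
      (fun i _ => ttEven_term_nonneg hδ hn i) hmem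
  rw [if_pos Even.zero] at hsingle
  simpa [TtEven] using hsingle

lemma ttEven_upper {κ : ℕ} (hδ : 0 < δ) (hn : n ≠ 0) :
    TtEven κ δ n ≤ 2 ^ (2 * κ + 1) * (n : ℝ) ^ (2 * κ) := by
  have hna := abs_n_pos hn
  have hL := Lmul_pos hδ hn
  have ha0 : (0:ℝ) ≤ δ * Lmul δ n := by positivity
  have ha : δ * Lmul δ n ≤ |(n : ℝ)| := deltaLmul_le hδ hn
  have hnevp : (n : ℝ) ^ (2 * κ) = |(n : ℝ)| ^ (2 * κ) :=
    (Even.pow_abs ⟨κ, by omega⟩ _).symm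
  rw [TtEven]
  apply sum_choose_bound (M := 2 * κ + 1) (m := 2 * κ + 1) (by omega) _ _
    (by rw [hnevp]; positivity)
  intro ℓ hℓ
  rw [Finset.mem_range] at hℓ
  split
  case isTrue hev =>
    have habs : (n : ℝ) ^ (2 * κ - ℓ) = |(n : ℝ)| ^ (2 * κ - ℓ) :=
      (Even.pow_abs (even_sub_even hev) _).symm
    have heq : δ ^ ℓ * Lmul δ n ^ ℓ = (δ * Lmul δ n) ^ ℓ := (mul_pow _ _ _).symm
    have hpow : (δ * Lmul δ n) ^ ℓ ≤ |(n : ℝ)| ^ ℓ := pow_le_pow_left₀ ha0 ha _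
    calc ((2 * κ + 1).choose ℓ : ℝ) * δ ^ ℓ * Lmul δ n ^ ℓ * (n : ℝ) ^ (2 * κ - ℓ)
        = ((2 * κ + 1).choose ℓ : ℝ) * ((δ * Lmul δ n) ^ ℓ * |(n : ℝ)| ^ (2 * κ - ℓ)) := by
          rw [habs]
          linear_combination (((2 * κ + 1).choose ℓ : ℝ) * |(n : ℝ)| ^ (2 * κ - ℓ)) * heq
      _ ≤ ((2 * κ + 1).choose ℓ : ℝ) * (|(n : ℝ)| ^ ℓ * |(n : ℝ)| ^ (2 * κ - ℓ)) := by
          gcongr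
      _ = ((2 * κ + 1).choose ℓ : ℝ) * (n : ℝ) ^ (2 * κ) := by
          rw [← pow_add, show ℓ + (2 * κ - ℓ) = 2 * κ from by omega, hnevp]
  case isFalse =>
    rw [hnevp]; positivity

lemma ttOdd_tendsto {κ : ℕ} (hκ : 1 ≤ κ) {n : ℤ} (hn : n ≠ 0) :
    Tendsto (fun δ : ℝ => TtOdd κ δ n) (nhdsWithin 0 (Set.Ioi 0))
      (nhds ((n : ℝ) ^ (2 * κ))) := by
  have hL := Lmul_tendsto hn
  have hsum : Tendsto (fun δ : ℝ => TtOdd κ δ n) (nhdsWithin 0 (Set.Ioi 0))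
      (nhds (∑ ℓ ∈ Finset.range (2 * κ), if Odd ℓ then
        (3 / (2 * κ : ℝ)) * ((2 * κ).choose ℓ : ℝ) * (0:ℝ) ^ (ℓ - 1) *
          ((n : ℝ) ^ 2 / 3) ^ ℓ * (n : ℝ) ^ (2 * κ - 1 - ℓ) else 0)) := by
    apply tendsto_finset_sum
    intro ℓ _
    by_cases hodd : Odd ℓ
    · simp only [if_pos hodd]
      have hδpow : Tendsto (fun δ : ℝ => δ ^ (ℓ - 1)) (nhdsWithin 0 (Set.Ioi 0))
          (nhds ((0:ℝ) ^ (ℓ - 1))) :=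
        ((continuous_pow (ℓ - 1)).tendsto 0).mono_left nhdsWithin_le_nhds
      exact ((tendsto_const_nhds.mul hδpow).mul (hL.pow ℓ)).mul tendsto_const_nhds
    · simp only [if_neg hodd]
      exact tendsto_const_nhds
  have hS : (∑ ℓ ∈ Finset.range (2 * κ), if Odd ℓ then
      (3 / (2 * κ : ℝ)) * ((2 * κ).choose ℓ : ℝ) * (0:ℝ) ^ (ℓ - 1) *
        ((n : ℝ) ^ 2 / 3) ^ ℓ * (n : ℝ) ^ (2 * κ - 1 - ℓ) else 0) = (n : ℝ) ^ (2 * κ) := by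
    rw [Finset.sum_eq_single_of_mem 1 (Finset.mem_range.mpr (by omega))]
    · rw [if_pos odd_one, Nat.choose_one_right]
      have h2κ : (2 * κ : ℝ) ≠ 0 := by
        have : (1:ℝ) ≤ (κ:ℝ) := Nat.one_le_cast.mpr hκ
        positivity
      have hpow : (n : ℝ) ^ 2 * (n : ℝ) ^ (2 * κ - 1 - 1) = (n : ℝ) ^ (2 * κ) := by
        rw [← pow_add]; congr 1; omega
      simp only [pow_one]
      push_cast
      field_simp
      linear_combination hpow
    · intro b _ hb1
      by_cases hodd : Odd b
      · obtain ⟨k, hk⟩ := hodd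
        rw [if_pos ⟨k, hk⟩, zero_pow (show b - 1 ≠ 0 by omega)]
        ring
      · rw [if_neg hodd]
  rwa [hS] at hsum

lemma ttEven_tendsto {κ : ℕ} {n : ℤ} (hn : n ≠ 0) :
    Tendsto (fun δ : ℝ => TtEven κ δ n) (nhdsWithin 0 (Set.Ioi 0))
      (nhds ((n : ℝ) ^ (2 * κ))) := by
  have hL := Lmul_tendsto hn
  have hsum : Tendsto (fun δ : ℝ => TtEven κ δ n) (nhdsWithin 0 (Set.Ioi 0))
      (nhds (∑ ℓ ∈ Finset.range (2 * κ + 1), if Even ℓ then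
        ((2 * κ + 1).choose ℓ : ℝ) * (0:ℝ) ^ ℓ * ((n : ℝ) ^ 2 / 3) ^ ℓ *
          (n : ℝ) ^ (2 * κ - ℓ) else 0)) := by
    apply tendsto_finset_sum
    intro ℓ _
    by_cases hev : Even ℓ
    · simp only [if_pos hev]
      have hδpow : Tendsto (fun δ : ℝ => δ ^ ℓ) (nhdsWithin 0 (Set.Ioi 0))
          (nhds ((0:ℝ) ^ ℓ)) :=
        ((continuous_pow ℓ).tendsto 0).mono_left nhdsWithin_le_nhds
      exact ((tendsto_const_nhds.mul hδpow).mul (hL.pow ℓ)).mul tendsto_const_nhds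
    · simp only [if_neg hev]
      exact tendsto_const_nhds
  have hS : (∑ ℓ ∈ Finset.range (2 * κ + 1), if Even ℓ then
      ((2 * κ + 1).choose ℓ : ℝ) * (0:ℝ) ^ ℓ * ((n : ℝ) ^ 2 / 3) ^ ℓ *
        (n : ℝ) ^ (2 * κ - ℓ) else 0) = (n : ℝ) ^ (2 * κ) := by
    rw [Finset.sum_eq_single_of_mem 0 (Finset.mem_range.mpr (by omega))]
    · simp
    · intro b _ hb0
      by_cases hev : Even b
      · rw [if_pos hev, zero_pow hb0]
        ring
      · rw [if_neg hev]
  rwa [hS] at hsum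

/-- For `κ ≥ 1`: for every nonzero `n`, `T̃_{δ,κ−1/2}(n) → n^{2κ}` and
`T̃_{δ,κ}(n) → n^{2κ}` as `δ → 0`.  Moreover, for fixed `0 < δ ≤ 1` one has
`|n|^{2κ−1} ≲_δ T̃_{δ,κ−1/2}(n) ≲ min(δ^{−1}|n|^{2κ−1}, n^{2κ})` (the upper bound being
uniform in `0 < δ ≤ 1`), and `T̃_{δ,κ}(n)` is comparable to `n^{2κ}` uniformly in `n` and
`0 < δ ≤ 1`. -/
theorem stmt18 (κ : ℕ) (hκ : 1 ≤ κ) :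
    (∀ n : ℤ, n ≠ 0 →
      Tendsto (fun δ : ℝ => TtOdd κ δ n) (nhdsWithin 0 (Set.Ioi 0))
        (nhds ((n : ℝ) ^ (2 * κ))) ∧
      Tendsto (fun δ : ℝ => TtEven κ δ n) (nhdsWithin 0 (Set.Ioi 0))
        (nhds ((n : ℝ) ^ (2 * κ)))) ∧
    (∀ δ : ℝ, 0 < δ → δ ≤ 1 → ∃ c : ℝ, 0 < c ∧ ∀ n : ℤ, n ≠ 0 →
      c * |(n : ℝ)| ^ (2 * κ - 1) ≤ TtOdd κ δ n) ∧
    (∃ C : ℝ, 0 < C ∧ ∀ δ : ℝ, 0 < δ → δ ≤ 1 → ∀ n : ℤ, n ≠ 0 →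
      TtOdd κ δ n ≤ C * min (δ⁻¹ * |(n : ℝ)| ^ (2 * κ - 1)) ((n : ℝ) ^ (2 * κ))) ∧
    (∃ c C : ℝ, 0 < c ∧ 0 < C ∧ ∀ δ : ℝ, 0 < δ → δ ≤ 1 → ∀ n : ℤ, n ≠ 0 →
      c * (n : ℝ) ^ (2 * κ) ≤ TtEven κ δ n ∧ TtEven κ δ n ≤ C * (n : ℝ) ^ (2 * κ)) := by
  refine ⟨fun n hn => ⟨ttOdd_tendsto hκ hn, ttEven_tendsto hn⟩, ?_, ?_, ?_⟩
  · intro δ hδ hδ1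
    exact ⟨(Real.cosh 2)⁻¹, inv_pos.mpr (Real.cosh_pos 2),
      fun n hn => ttOdd_lower hκ hδ hδ1 hn⟩
  · exact ⟨3 * 2 ^ (2 * κ), by positivity, fun δ hδ hδ1 n hn => ttOdd_upper hκ hδ hn⟩
  · exact ⟨1, 2 ^ (2 * κ + 1), one_pos, by positivity, fun δ hδ hδ1 n hn =>
      ⟨by simpa using ttEven_lower hδ hn, ttEven_upper hδ hn⟩⟩
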